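/- Let m ≥ 2 and n ≥ 1. The order of the out m-shuffle O_m, as an element of the symmetric group on the m·n card positions, equals the multiplicative order of m modulo m·n−1 (note m is invertible mod m·n−1 since m·n ≡ 1 (mod m·n−1)). -/

import Mathlib

/-- For `m ≥ 2`, `n ≥ 1`, the order of the out `m`-shuffle `O` on a deck of
`m·n` cards (the permutation sending index `i` to `m·(i mod n) + ⌊i/n⌋`), as an element of the
symmetric group on the `m·n` positions, equals the multiplicative order of `m` modulo `m·n − 1`. -/
theorem out_shuffle_order (m n : ℕ) (hm : 2 ≤ m) (hn : 1 ≤ n)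
    (O : Equiv.Perm (Fin (m * n)))
    (hO : ∀ i : Fin (m * n), (O i : ℕ) = m * ((i : ℕ) % n) + (i : ℕ) / n) :
    orderOf O = orderOf (m : ZMod (m * n - 1)) := by
  have h2 : 2 ≤ m * n := le_trans hm (Nat.le_mul_of_pos_right m hn)
  set N := m * n - 1 with hNdef
  have hmn : m * n = N + 1 := by omega
  have hN1 : 1 ≤ N := by omega
  have hNlt : N < m * n := by omega
  -- computing N % n and N / n
  have hmle : m ≤ m * n := Nat.le_mul_of_pos_right m hn
  have hnle : n ≤ m * n := Nat.le_mul_of_pos_left n (by omega)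
  have eN : N = (n - 1) + (m - 1) * n := by
    have h3 : (m - 1) * n = m * n - 1 * n := Nat.sub_mul m 1 n
    omega
  have hNmod : N % n = n - 1 := by
    rw [eN, Nat.add_mul_mod_self_right, Nat.mod_eq_of_lt (by omega)]
  have hNdiv : N / n = m - 1 := by
    rw [eN, Nat.add_mul_div_right _ _ (by omega : 0 < n),
      Nat.div_eq_of_lt (by omega), Nat.zero_add]
  -- O fixes the last card
  have hfix : O ⟨N, hNlt⟩ = ⟨N, hNlt⟩ := by
    apply Fin.ext
    rw [hO ⟨N, hNlt⟩]
    show m * (N % n) + N / n = N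
    rw [hNmod, hNdiv]
    have h4 : m * (n - 1) = m * n - m * 1 := Nat.mul_sub m n 1
    omega
  -- general arithmetic identity avoiding the Fin type
  have arith : ∀ q r : ℕ, m * (n * q + r) = N * q + (m * r + q) := by
    intro q r
    calc m * (n * q + r) = (m * n) * q + m * r := by ring
      _ = (N + 1) * q + m * r := by rw [hmn]
      _ = N * q + (m * r + q) := by ring
  -- value of O on a non-last card
  have step : ∀ j : Fin (m * n), (j : ℕ) < N → (O j : ℕ) = m * (j : ℕ) % N := by
    intro j hj
    have h3 : n * ((j : ℕ) / n) + (j : ℕ) % n = (j : ℕ) := Nat.div_add_mod _ n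
    have e := arith ((j : ℕ) / n) ((j : ℕ) % n)
    rw [h3] at e
    have hlt : (O j : ℕ) < N := by
      have hle : (O j : ℕ) < m * n := (O j).isLt
      have hne : O j ≠ ⟨N, hNlt⟩ := by
        intro h
        rw [← hfix] at h
        have h6 := O.injective h
        rw [h6] at hj
        simp at hj
      have hne' : (O j : ℕ) ≠ N := fun h => hne (Fin.ext h)
      omega
    have hmm : m * (j : ℕ) % N = (m * ((j : ℕ) % n) + (j : ℕ) / n) % N := by
      rw [e, Nat.mul_add_mod]
    rw [hO j] at hlt ⊢
    rw [hmm, Nat.mod_eq_of_lt hlt]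
  -- iterated version
  have key : ∀ (k : ℕ) (i : Fin (m * n)), (i : ℕ) < N →
      ((O ^ k) i : ℕ) = m ^ k * (i : ℕ) % N := by
    intro k
    induction k with
    | zero => intro i hi; simp [Nat.mod_eq_of_lt hi]
    | succ k ih =>
      intro i hi
      have h5 : ((O ^ k) i : ℕ) < N := by
        have h7 := ih i hi
        have h8 := Nat.mod_lt (m ^ k * (i : ℕ)) (by omega : 0 < N)
        omega
      rw [pow_succ', Equiv.Perm.mul_apply, step _ h5, ih i hi]
      have h9 : m * (m ^ k * (i : ℕ) % N) % N = m * (m ^ k * (i : ℕ)) % N :=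
        Nat.ModEq.mul_left m (Nat.mod_modEq _ _)
      rw [h9, ← mul_assoc, ← pow_succ']
  have keyfix : ∀ k : ℕ, (O ^ k) ⟨N, hNlt⟩ = ⟨N, hNlt⟩ := by
    intro k
    induction k with
    | zero => simp
    | succ k ih => rw [pow_succ', Equiv.Perm.mul_apply, ih, hfix]
  -- main equivalence
  apply orderOf_eq_orderOf_iff.mpr
  intro k
  have hcast : ((m : ZMod N)) ^ k = ((m ^ k : ℕ) : ZMod N) := by push_cast; ring
  have hiff : ((m : ZMod N)) ^ k = 1 ↔ m ^ k ≡ 1 [MOD N] := by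
    rw [hcast, show (1 : ZMod N) = ((1 : ℕ) : ZMod N) by simp,
      ZMod.natCast_eq_natCast_iff]
  rw [hiff]
  constructor
  · intro h
    rcases Nat.lt_or_ge N 2 with hsm | hbig
    · have hone : N = 1 := by omega
      rw [hone]
      exact Nat.modEq_one
    · have h10 := key k ⟨1, by omega⟩ (by show (1 : ℕ) < N; omega)
      rw [h] at h10
      simp at h10
      show m ^ k % N = 1 % N
      rw [Nat.mod_eq_of_lt (by omega : 1 < N)]
      omega
  · intro h
    ext i
    rcases Nat.lt_or_ge (i : ℕ) N with hi | hi
    · have h11 := key k i hi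
      have hmul : m ^ k * (i : ℕ) ≡ 1 * (i : ℕ) [MOD N] := Nat.ModEq.mul_right _ h
      rw [one_mul] at hmul
      have h12 : ((O ^ k) i : ℕ) = (i : ℕ) := by
        rw [h11]
        unfold Nat.ModEq at hmul
        rw [hmul, Nat.mod_eq_of_lt hi]
      simp [Fin.ext h12]
    · have h13 : i = ⟨N, hNlt⟩ := by
        apply Fin.ext
        have h14 := i.isLt
        show (i : ℕ) = N
        omega
      rw [h13]
      simp [keyfix k]
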